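/- For T ≥ 1, n ≥ 1, nonnegative integers r', s' not both zero, and q' = r' + s' − 1, the (r'+2s')n-dimensional Lebesgue volume of the set {(x_1,…,x_{r'}, y_1,…,y_{s'}) ∈ (ℝ^n)^{r'} × (ℂ^n)^{s'} : ∏_{i} |x_i|_∞ · ∏_{j} |y_j|_∞² ≤ T and |x_i|_∞ ≥ 1, |y_j|_∞ ≥ 1 for all i, j} equals 2^{r'n} π^{s'n} (−1)^{q'} ( −1 + T^n Σ_{i=0}^{q'} (−log T^n)^i / i! ). -/

import Mathlib

open MeasureTheory Real

open Set Metric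
open scoped ENNReal NNReal

noncomputable def Ffun (m : ℕ) (S : ℝ) : ℝ :=
  (-1 : ℝ) ^ (m - 1) * (-1 + S * ∑ i ∈ Finset.range m, (-Real.log S) ^ i / (Nat.factorial i))

lemma Ffun_continuousOn (m : ℕ) {S : ℝ} (hS : 1 ≤ S) :
    ContinuousOn (fun w => Ffun m (S / w)) (Icc 1 S) := by
  have hne : ∀ w ∈ Icc (1:ℝ) S, w ≠ 0 := fun w hw => by
    have := hw.1; intro h; simp [h] at this; linarith
  have hdiv : ContinuousOn (fun w : ℝ => S / w) (Icc 1 S) :=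
    continuousOn_const.div continuousOn_id hne
  have hlog : ContinuousOn (fun w : ℝ => Real.log (S / w)) (Icc 1 S) := by
    refine Real.continuousOn_log.comp hdiv ?_
    intro w hw
    have h1 : (1:ℝ) ≤ w := hw.1
    have : 0 < S / w := by positivity
    simp [this.ne']
  unfold Ffun
  refine continuousOn_const.mul (continuousOn_const.add (hdiv.mul ?_))
  refine continuousOn_finset_sum _ fun i _ => ?_
  exact ((hlog.neg).pow i).div_const _

lemma Ffun_integral (m : ℕ) {S : ℝ} (hS : 1 ≤ S) :
    ∫ w in (1:ℝ)..S, Ffun (m + 1) (S / w) = Ffun (m + 2) S := by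
  set c := Real.log S with hc
  set A : ℝ → ℝ := fun w => (-1 : ℝ) ^ m *
    (-w + S * (∑ j ∈ Finset.range (m + 2), (Real.log w - c) ^ j / (Nat.factorial j) - 1)) with hA
  have hderiv : ∀ w ∈ uIcc (1:ℝ) S, HasDerivAt A (Ffun (m + 1) (S / w)) w := by
    intro w hw
    rw [uIcc_of_le hS] at hw
    have hw0 : (0:ℝ) < w := lt_of_lt_of_le one_pos hw.1
    have hlog : HasDerivAt (fun w : ℝ => Real.log w - c) w⁻¹ w :=
      (Real.hasDerivAt_log hw0.ne').sub_const c
    have hsum : HasDerivAt (fun w : ℝ => ∑ j ∈ Finset.range (m + 2), (Real.log w - c) ^ j / (Nat.factorial j))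
        ((∑ i ∈ Finset.range (m + 1), (Real.log w - c) ^ i / (Nat.factorial i)) * w⁻¹) w := by
      have h1 : HasDerivAt (fun w : ℝ => ∑ j ∈ Finset.range (m + 2), (Real.log w - c) ^ j / (Nat.factorial j))
          (∑ j ∈ Finset.range (m + 2), ((j : ℝ) * (Real.log w - c) ^ (j - 1) * w⁻¹) / (Nat.factorial j)) w := by
        refine HasDerivAt.fun_sum fun j _ => ?_
        exact ((hlog.pow j)).div_const _
      convert h1 using 1
      rw [Finset.sum_mul]
      rw [Finset.sum_range_succ' (fun j => ((j : ℝ) * (Real.log w - c) ^ (j - 1) * w⁻¹) / (Nat.factorial j)) (m+1)]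
      simp only [Nat.cast_zero, zero_mul, Nat.factorial_zero, Nat.cast_one, div_one, zero_div, add_zero]
      refine Finset.sum_congr rfl fun i _ => ?_
      rw [Nat.factorial_succ]
      push_cast
      have : (i:ℝ) + 1 ≠ 0 := by positivity
      field_simp
    have hA' : HasDerivAt A ((-1:ℝ)^m * (-1 + S * ((∑ i ∈ Finset.range (m + 1), (Real.log w - c) ^ i / (Nat.factorial i)) * w⁻¹))) w := by
      exact (((hasDerivAt_id w).neg.add ((hsum.sub_const 1).const_mul S)).const_mul _).congr_deriv (by ring)
    convert hA' using 1
    unfold Ffun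
    have hlogdiv : Real.log (S / w) = c - Real.log w := Real.log_div (by linarith) hw0.ne'
    have : ∀ i, (-Real.log (S / w)) ^ i = (Real.log w - c) ^ i := by
      intro i; rw [hlogdiv]; ring_nf
    simp only [this, Nat.add_sub_cancel]
    field_simp
  have hint : IntervalIntegrable (fun w => Ffun (m+1) (S / w)) volume 1 S := by
    refine (Ffun_continuousOn (m+1) hS).intervalIntegrable_of_Icc hS
  rw [intervalIntegral.integral_eq_sub_of_hasDerivAt hderiv hint]
  have hAS : A S = (-1:ℝ)^m * (-S) := by
    have : Real.log S - c = 0 := by simp [hc]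
    rw [hA]
    simp only [this]
    have hsum0 : ∑ j ∈ Finset.range (m + 2), (0:ℝ) ^ j / (Nat.factorial j) = 1 := by
      rw [Finset.sum_eq_single 0]
      · simp
      · intro b _ hb; simp [zero_pow hb]
      · simp
    rw [hsum0]
    ring_nf
  have hA1 : A 1 = (-1:ℝ)^m * (-1 + S * (∑ j ∈ Finset.range (m + 2), (-c) ^ j / (Nat.factorial j) - 1)) := by
    rw [hA]; simp only [Real.log_one, zero_sub]
  rw [hAS, hA1]
  unfold Ffun
  have h21 : m + 2 - 1 = m + 1 := rfl
  rw [h21]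
  have : (-1:ℝ)^(m+1) = -(-1:ℝ)^m := by ring
  rw [this]
  ring

lemma one_le_prod_real {m:ℕ} {v : Fin m → ℝ} (h : ∀ i, 1 ≤ v i) : 1 ≤ ∏ i, v i := by
  calc (1:ℝ) = ∏ _i : Fin m, 1 := by simp
  _ ≤ ∏ i, v i := Finset.prod_le_prod (fun i _ => zero_le_one) (fun i _ => h i)

lemma meas_set (k : ℕ) (S : ℝ) :
    MeasurableSet {w : Fin k → ℝ | (∀ i, 1 ≤ w i) ∧ ∏ i, w i ≤ S} := by
  have : {w : Fin k → ℝ | (∀ i, 1 ≤ w i) ∧ ∏ i, w i ≤ S}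
      = (⋂ i, {w : Fin k → ℝ | 1 ≤ w i}) ∩ {w : Fin k → ℝ | ∏ i, w i ≤ S} := by
    ext w; simp [mem_iInter]
  rw [this]
  refine MeasurableSet.inter (MeasurableSet.iInter fun i => ?_) ?_
  · exact measurableSet_le measurable_const (measurable_pi_apply i)
  · exact measurableSet_le (Finset.measurable_prod _ fun i _ => measurable_pi_apply i)
      measurable_const

lemma key (m : ℕ) : ∀ S : ℝ, 1 ≤ S →
    (Measure.pi (fun _ : Fin (m+1) => (volume : Measure ℝ)))
      {w | (∀ i, 1 ≤ w i) ∧ ∏ i, w i ≤ S} = ENNReal.ofReal (Ffun (m+1) S) ∧ 0 ≤ Ffun (m+1) S := by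
  induction m with
  | zero =>
    intro S hS
    have he := (volume_preserving_funUnique (Fin 1) ℝ)
    have hset : {w : Fin 1 → ℝ | (∀ i, 1 ≤ w i) ∧ ∏ i, w i ≤ S}
        = (MeasurableEquiv.funUnique (Fin 1) ℝ) ⁻¹' (Icc 1 S) := by
      ext w
      simp [MeasurableEquiv.funUnique, Fin.forall_fin_one, Fin.prod_univ_one, mem_Icc]
    have hF : Ffun 1 S = S - 1 := by simp [Ffun]; ring
    constructor
    · rw [← MeasureTheory.volume_pi, hset]; erw [he.measure_preimage (measurableSet_Icc (a := (1:ℝ)) (b := S)).nullMeasurableSet]; rw [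
        Real.volume_Icc, hF]
    · rw [hF]; linarith
  | succ m ih =>
    intro S hS
    have hmp := measurePreserving_piFinSuccAbove (fun _ : Fin (m+2) => (volume : Measure ℝ)) 0
    set e := MeasurableEquiv.piFinSuccAbove (fun _ : Fin (m+2) => ℝ) 0 with he
    set A' : Set (ℝ × (Fin (m+1) → ℝ)) :=
      {p | (1 ≤ p.1 ∧ ∀ i, 1 ≤ p.2 i) ∧ p.1 * ∏ i, p.2 i ≤ S} with hA'
    have hA'meas : MeasurableSet A' := by
      have h2 : A' = ({p : ℝ × (Fin (m+1) → ℝ) | 1 ≤ p.1}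
          ∩ ⋂ i, {p : ℝ × (Fin (m+1) → ℝ) | 1 ≤ p.2 i})
          ∩ {p : ℝ × (Fin (m+1) → ℝ) | p.1 * ∏ i, p.2 i ≤ S} := by
        ext p; simp [hA', mem_iInter, and_assoc]
      rw [h2]
      have hsnd : ∀ i : Fin (m+1), Measurable fun p : ℝ × (Fin (m+1) → ℝ) => p.2 i :=
        fun i => (measurable_pi_apply i).comp measurable_snd
      refine MeasurableSet.inter (MeasurableSet.inter ?_ (MeasurableSet.iInter fun i => ?_)) ?_
      · exact measurableSet_le measurable_const measurable_fst
      · exact measurableSet_le measurable_const (hsnd i)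
      · exact measurableSet_le (measurable_fst.mul
          (Finset.measurable_prod _ fun i _ => hsnd i)) measurable_const
    have hset : {w : Fin (m+2) → ℝ | (∀ i, 1 ≤ w i) ∧ ∏ i, w i ≤ S} = e ⁻¹' A' := by
      ext w
      have h1 : e w = (w 0, fun j => w (Fin.succAbove 0 j)) := rfl
      simp only [mem_setOf_eq, mem_preimage, h1, hA']
      have hprod := Fin.prod_univ_succAbove (fun i => w i) (0 : Fin (m+2))
      constructor
      · rintro ⟨h1', h2'⟩
        exact ⟨⟨h1' 0, fun i => h1' _⟩, by rw [← hprod]; exact h2'⟩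
      · rintro ⟨⟨ha, hb⟩, hc⟩
        refine ⟨fun i => ?_, by rw [hprod]; exact hc⟩
        induction i using Fin.cases with
        | zero => exact ha
        | succ j => simpa using hb j
    have hslice : ∀ x : ℝ, (Measure.pi (fun _ : Fin (m+1) => (volume : Measure ℝ)))
        (Prod.mk x ⁻¹' A')
        = Set.indicator (Icc 1 S) (fun x => ENNReal.ofReal (Ffun (m+1) (S/x))) x := by
      intro x
      by_cases hx : x ∈ Icc (1:ℝ) S
      · have hx0 : (0:ℝ) < x := lt_of_lt_of_le one_pos hx.1
        have hSx : 1 ≤ S / x := (one_le_div hx0).2 hx.2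
        have hpre : Prod.mk x ⁻¹' A' = {v : Fin (m+1) → ℝ | (∀ i, 1 ≤ v i) ∧ ∏ i, v i ≤ S / x} := by
          ext v
          simp only [mem_preimage, hA', mem_setOf_eq, le_div_iff₀ hx0]
          constructor
          · rintro ⟨⟨_, h2⟩, h3⟩; exact ⟨h2, by linarith [mul_comm x (∏ i, v i)] ⟩
          · rintro ⟨h2, h3⟩; exact ⟨⟨hx.1, h2⟩, by linarith [mul_comm x (∏ i, v i)]⟩
        rw [hpre, (ih (S/x) hSx).1, Set.indicator_of_mem hx]
      · have hpre : Prod.mk x ⁻¹' A' = ∅ := by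
          ext v
          simp only [mem_preimage, hA', mem_setOf_eq, mem_empty_iff_false, iff_false, not_and]
          rintro ⟨h1x, h2⟩ him
          rw [mem_Icc] at hx
          push_neg at hx
          have hSx := hx h1x
          have hprod : 1 ≤ ∏ i, v i := one_le_prod_real h2
          have : x ≤ x * ∏ i, v i := le_mul_of_one_le_right (by linarith) hprod
          linarith
        rw [hpre, Set.indicator_of_notMem hx]
        simp
    have hIcont : ContinuousOn (fun x => Ffun (m+1) (S/x)) (Icc 1 S) := Ffun_continuousOn _ hS
    have hint : IntegrableOn (fun x => Ffun (m+1) (S/x)) (Icc 1 S) volume :=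
      hIcont.integrableOn_compact isCompact_Icc
    have hnn : ∀ x ∈ Icc (1:ℝ) S, 0 ≤ Ffun (m+1) (S/x) := by
      intro x hx
      have hx0 : (0:ℝ) < x := lt_of_lt_of_le one_pos hx.1
      exact (ih (S/x) ((one_le_div hx0).2 hx.2)).2
    have hval : ∫ x in Icc (1:ℝ) 1, (0:ℝ) = 0 := by simp
    have hcalc : (Measure.pi (fun _ : Fin (m+2) => (volume : Measure ℝ)))
        {w | (∀ i, 1 ≤ w i) ∧ ∏ i, w i ≤ S} = ENNReal.ofReal (Ffun (m+2) S) := by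
      rw [hset, hmp.measure_preimage hA'meas.nullMeasurableSet,
        Measure.prod_apply hA'meas]
      calc ∫⁻ x, (Measure.pi fun _ : Fin (m+1) => (volume : Measure ℝ)) (Prod.mk x ⁻¹' A')
          = ∫⁻ x, Set.indicator (Icc 1 S) (fun x => ENNReal.ofReal (Ffun (m+1) (S/x))) x := by
            exact lintegral_congr hslice
        _ = ∫⁻ x in Icc 1 S, ENNReal.ofReal (Ffun (m+1) (S/x)) := by
            rw [lintegral_indicator measurableSet_Icc]
        _ = ENNReal.ofReal (∫ x in Icc (1:ℝ) S, Ffun (m+1) (S/x)) := by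
            rw [← ofReal_integral_eq_lintegral_ofReal hint]
            exact (ae_restrict_iff' measurableSet_Icc).2 (Filter.Eventually.of_forall hnn)
        _ = ENNReal.ofReal (Ffun (m+2) S) := by
            rw [MeasureTheory.integral_Icc_eq_integral_Ioc,
              ← intervalIntegral.integral_of_le hS, Ffun_integral m hS]
    refine ⟨hcalc, ?_⟩
    rw [← Ffun_integral m hS, intervalIntegral.integral_of_le hS,
      ← MeasureTheory.integral_Icc_eq_integral_Ioc]
    exact setIntegral_nonneg measurableSet_Icc hnn

lemma keyι (ι : Type) [Fintype ι] (m : ℕ) (hcard : Fintype.card ι = m + 1)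
    {S : ℝ} (hS : 1 ≤ S) :
    (Measure.pi (fun _ : ι => (volume : Measure ℝ)))
      {w : ι → ℝ | (∀ i, 1 ≤ w i) ∧ ∏ i, w i ≤ S} = ENNReal.ofReal (Ffun (m+1) S) := by
  have f : Fin (m+1) ≃ ι := (Fintype.equivFinOfCardEq hcard).symm
  have hmp := measurePreserving_piCongrLeft (fun _ : ι => (volume : Measure ℝ)) f
  set e := MeasurableEquiv.piCongrLeft (fun _ : ι => ℝ) f with he
  have hmeas : MeasurableSet {w : ι → ℝ | (∀ i, 1 ≤ w i) ∧ ∏ i, w i ≤ S} := by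
    have : {w : ι → ℝ | (∀ i, 1 ≤ w i) ∧ ∏ i, w i ≤ S}
        = (⋂ i, {w : ι → ℝ | 1 ≤ w i}) ∩ {w : ι → ℝ | ∏ i, w i ≤ S} := by
      ext w; simp [mem_iInter]
    rw [this]
    refine MeasurableSet.inter (MeasurableSet.iInter fun i => ?_) ?_
    · exact measurableSet_le measurable_const (measurable_pi_apply i)
    · exact measurableSet_le (Finset.measurable_prod _ fun i _ => measurable_pi_apply i)
        measurable_const
  have hpre : e ⁻¹' {w : ι → ℝ | (∀ i, 1 ≤ w i) ∧ ∏ i, w i ≤ S}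
      = {w : Fin (m+1) → ℝ | (∀ i, 1 ≤ w i) ∧ ∏ i, w i ≤ S} := by
    ext g
    have happ : ∀ a : Fin (m+1), (e g) (f a) = g a := fun a => by
      simp [he, MeasurableEquiv.coe_piCongrLeft, Equiv.piCongrLeft_apply_apply]
    simp only [mem_preimage, mem_setOf_eq]
    constructor
    · rintro ⟨h1, h2⟩
      refine ⟨fun a => by rw [← happ a]; exact h1 (f a), ?_⟩
      have : ∏ i, (e g) i = ∏ a, g a := by
        rw [← f.prod_comp (fun i => (e g) i)]
        exact Finset.prod_congr rfl fun a _ => happ a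
      rw [← this]; exact h2
    · rintro ⟨h1, h2⟩
      refine ⟨fun i => ?_, ?_⟩
      · obtain ⟨a, rfl⟩ := f.surjective i
        rw [happ a]; exact h1 a
      · have : ∏ i, (e g) i = ∏ a, g a := by
          rw [← f.prod_comp (fun i => (e g) i)]
          exact Finset.prod_congr rfl fun a _ => happ a
        rw [this]; exact h2
  rw [← hmp.measure_preimage hmeas.nullMeasurableSet, hpre, (key m S hS).1]

lemma sigmaFinite_smul {α : Type*} [MeasurableSpace α] (μ : Measure α) [SigmaFinite μ]
    (c : ℝ≥0∞) (hc : c ≠ ⊤) : SigmaFinite (c • μ) := by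
  refine ⟨⟨⟨fun n => spanningSets μ n, fun _ => trivial, fun n => ?_, iUnion_spanningSets μ⟩⟩⟩
  rw [Measure.smul_apply, smul_eq_mul]
  exact ENNReal.mul_lt_top hc.lt_top (measure_spanningSets_lt_top μ n)

lemma map_pow_norm {E : Type*} [NormedAddCommGroup E] [NormedSpace ℝ E] [MeasurableSpace E]
    [BorelSpace E] [FiniteDimensional ℝ E] [Nontrivial E] (μ : Measure E) [μ.IsAddHaarMeasure] :
    Measure.map (fun x : E => ‖x‖ ^ (Module.finrank ℝ E)) μ
      = μ (closedBall 0 1) • volume.restrict (Ioi 0) := by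
  set d := Module.finrank ℝ E with hd
  have hd0 : 0 < d := Module.finrank_pos
  set B := μ (closedBall (0:E) 1) with hB
  have hBfin : B ≠ ⊤ := measure_closedBall_lt_top.ne
  have hmeas : Measurable fun x : E => ‖x‖ ^ d := measurable_norm.pow_const d
  have hIic : ∀ b : ℝ, 0 ≤ b → {x : E | ‖x‖ ^ d ≤ b} = closedBall 0 (b ^ ((d:ℝ)⁻¹)) := by
    intro b hb
    ext x
    have hrb : (0:ℝ) ≤ b ^ ((d:ℝ)⁻¹) := Real.rpow_nonneg hb _
    have hrbd : (b ^ ((d:ℝ)⁻¹)) ^ d = b := Real.rpow_inv_natCast_pow hb hd0.ne'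
    simp only [mem_setOf_eq, mem_closedBall, dist_zero_right]
    rw [← hrbd, pow_le_pow_iff_left₀ (norm_nonneg x) hrb hd0.ne', hrbd]
  have hcb : ∀ r : ℝ, 0 ≤ r → μ (closedBall (0:E) r) = ENNReal.ofReal (r ^ d) * B := by
    intro r hr
    rw [hB, Measure.addHaar_closedBall' μ 0 hr]
  refine Measure.ext_of_Ioc' _ _ ?_ ?_
  · intro a b hab
    rw [Measure.map_apply hmeas measurableSet_Ioc]
    refine ne_of_lt (lt_of_le_of_lt (measure_mono ?_) (measure_closedBall_lt_top
      (x := (0:E)) (r := (max b 0) ^ ((d:ℝ)⁻¹))))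
    intro x hx
    have : ‖x‖ ^ d ≤ max b 0 := le_max_of_le_left hx.2
    rw [← hIic (max b 0) (le_max_right _ _)]
    exact this
  · intro a b hab
    rw [Measure.map_apply hmeas measurableSet_Ioc]
    rcases le_or_gt b 0 with hb | hb
    · have hsub : (fun x : E => ‖x‖ ^ d) ⁻¹' Ioc a b ⊆ {0} := by
        intro x hx
        have h1 : ‖x‖ ^ d ≤ 0 := le_trans hx.2 hb
        have h2 : 0 ≤ ‖x‖ ^ d := pow_nonneg (norm_nonneg x) d
        have h3 : ‖x‖ ^ d = 0 := le_antisymm h1 h2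
        have := pow_eq_zero_iff hd0.ne' |>.1 h3
        simpa [norm_eq_zero] using this
      have h1 : μ ((fun x : E => ‖x‖ ^ d) ⁻¹' Ioc a b) = 0 :=
        le_antisymm (le_trans (measure_mono hsub) (by simp [measure_singleton])) zero_le
      have h2 : Ioc a b ∩ Ioi 0 = ∅ := by
        ext x; simp only [mem_inter_iff, mem_Ioc, mem_Ioi, mem_empty_iff_false, iff_false]
        rintro ⟨⟨_, hxb⟩, hx0⟩; linarith
      rw [h1, Measure.smul_apply, Measure.restrict_apply measurableSet_Ioc, h2]
      simp
    · -- b > 0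
      have hIicb := hIic b hb.le
      have hrb : (0:ℝ) ≤ b ^ ((d:ℝ)⁻¹) := Real.rpow_nonneg hb.le _
      have hrbd : (b ^ ((d:ℝ)⁻¹)) ^ d = b := Real.rpow_inv_natCast_pow hb.le hd0.ne'
      have key : ∀ a₀ : ℝ, 0 ≤ a₀ → a₀ < b →
          μ ({x : E | ‖x‖ ^ d ≤ b} \ {x : E | ‖x‖ ^ d ≤ a₀}) = ENNReal.ofReal (b - a₀) * B := by
        intro a₀ ha₀ hab₀
        have hIica := hIic a₀ ha₀
        have hra : (0:ℝ) ≤ a₀ ^ ((d:ℝ)⁻¹) := Real.rpow_nonneg ha₀ _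
        have hrad : (a₀ ^ ((d:ℝ)⁻¹)) ^ d = a₀ := Real.rpow_inv_natCast_pow ha₀ hd0.ne'
        rw [hIicb, hIica]
        have hsub : closedBall (0:E) (a₀ ^ ((d:ℝ)⁻¹)) ⊆ closedBall 0 (b ^ ((d:ℝ)⁻¹)) := by
          apply closedBall_subset_closedBall
          rw [← pow_le_pow_iff_left₀ hra hrb hd0.ne', hrad, hrbd]
          exact hab₀.le
        rw [measure_diff hsub measurableSet_closedBall.nullMeasurableSet
          measure_closedBall_lt_top.ne, hcb _ hrb, hcb _ hra, hrbd, hrad,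
          ← ENNReal.sub_mul (fun _ _ => hBfin), ← ENNReal.ofReal_sub _ ha₀]
      have hvol : (B • volume.restrict (Ioi 0)) (Ioc a b)
          = ENNReal.ofReal (b - max a 0) * B := by
        have hinter : Ioc a b ∩ Ioi 0 = Ioc (max a 0) b := by
          ext x
          simp only [mem_inter_iff, mem_Ioc, mem_Ioi, max_lt_iff]
          tauto
        rw [Measure.smul_apply, Measure.restrict_apply measurableSet_Ioc, hinter,
          Real.volume_Ioc, smul_eq_mul, mul_comm]
      rw [hvol]
      rcases le_or_gt 0 a with ha | ha
      · have hmax : max a 0 = a := max_eq_left ha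
        have hpre : (fun x : E => ‖x‖ ^ d) ⁻¹' Ioc a b
            = {x : E | ‖x‖ ^ d ≤ b} \ {x : E | ‖x‖ ^ d ≤ a} := by
          ext x
          simp only [mem_preimage, mem_Ioc, mem_diff, mem_setOf_eq, not_le]
          tauto
        rw [hpre, key a ha hab, hmax]
      · have hmax : max a 0 = 0 := max_eq_right ha.le
        have hpre : (fun x : E => ‖x‖ ^ d) ⁻¹' Ioc a b = {x : E | ‖x‖ ^ d ≤ b} := by
          ext x
          have h2 : 0 ≤ ‖x‖ ^ d := pow_nonneg (norm_nonneg x) d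
          simp only [mem_preimage, mem_Ioc, mem_setOf_eq]
          constructor
          · rintro ⟨_, h2'⟩; exact h2'
          · intro h'; exact ⟨by linarith, h'⟩
        rw [hpre, hmax, hIicb, hcb _ hrb, hrbd, sub_zero]

lemma map_norm_real (n : ℕ) (hn : 1 ≤ n) :
    Measure.map (fun x : Fin n → ℝ => ‖x‖ ^ n) volume
      = ENNReal.ofReal (2 ^ n) • (volume.restrict (Ioi (0:ℝ))) := by
  haveI : Nonempty (Fin n) := ⟨⟨0, hn⟩⟩
  have hfr : Module.finrank ℝ (Fin n → ℝ) = n := by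
    simp [Module.finrank_pi]
  have := map_pow_norm (volume : Measure (Fin n → ℝ))
  rw [hfr] at this
  rw [this]
  congr 1
  rw [Real.volume_pi_closedBall 0 zero_le_one]
  norm_num

lemma map_norm_complex (n : ℕ) (hn : 1 ≤ n) :
    Measure.map (fun y : Fin n → ℂ => ‖y‖ ^ (2 * n)) volume
      = ENNReal.ofReal (Real.pi ^ n) • (volume.restrict (Ioi (0:ℝ))) := by
  haveI : Nonempty (Fin n) := ⟨⟨0, hn⟩⟩
  have hfr : Module.finrank ℝ (Fin n → ℂ) = 2 * n := by
    simp [Module.finrank_pi_fintype, Complex.finrank_real_complex]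
    ring
  have := map_pow_norm (volume : Measure (Fin n → ℂ))
  rw [hfr] at this
  rw [this]
  congr 1
  have hball : Metric.closedBall (0 : Fin n → ℂ) 1 = Set.pi univ fun _ => Metric.closedBall (0:ℂ) 1 := by
    exact closedBall_pi 0 zero_le_one
  rw [hball, volume_pi_pi, Complex.volume_closedBall]
  simp only [ENNReal.ofReal_one, one_pow, one_mul, Finset.prod_const, Finset.card_univ,
    Fintype.card_fin]
  rw [ENNReal.ofReal_pow Real.pi_pos.le]
  congr 1
  rw [← NNReal.coe_real_pi, ENNReal.ofReal_coe_nnreal]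

lemma map_pi_norm {E : Type*} [MeasurableSpace E] (μ : Measure E) [SigmaFinite μ]
    {f : E → ℝ} (hf : Measurable f) {ν : Measure ℝ} [SigmaFinite ν]
    (h : Measure.map f μ = ν) (k : ℕ) :
    Measure.map (fun x : Fin k → E => fun i => f (x i)) (Measure.pi fun _ => μ)
      = Measure.pi fun _ : Fin k => ν := by
  have hmeas : Measurable fun x : Fin k → E => fun i => f (x i) :=
    measurable_pi_lambda _ fun i => hf.comp (measurable_pi_apply i)
  refine (Measure.pi_eq fun s hs => ?_).symm
  rw [Measure.map_apply hmeas (MeasurableSet.univ_pi hs)]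
  have hp : (fun x : Fin k → E => fun i => f (x i)) ⁻¹' (univ.pi s)
      = univ.pi fun i => f ⁻¹' s i := by
    ext x; simp [Set.mem_pi]
  rw [hp, Measure.pi_pi]
  exact Finset.prod_congr rfl fun i _ => by rw [← h, Measure.map_apply hf (hs i)]

lemma pi_smul_restrict (k : ℕ) (c : ℝ≥0∞) (hc : c ≠ ⊤) :
    Measure.pi (fun _ : Fin k => c • (volume.restrict (Ioi (0:ℝ))))
      = (c ^ k) • ((Measure.pi fun _ : Fin k => (volume : Measure ℝ)).restrict
          (univ.pi fun _ => Ioi 0)) := by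
  haveI : SigmaFinite (c • (volume.restrict (Ioi (0:ℝ)))) :=
    sigmaFinite_smul _ c hc
  refine Measure.pi_eq fun s hs => ?_
  rw [Measure.smul_apply, Measure.restrict_apply (MeasurableSet.univ_pi hs),
    ← Set.pi_inter_distrib, Measure.pi_pi]
  simp only [Measure.smul_apply, Measure.restrict_apply (hs _), smul_eq_mul]
  rw [Finset.prod_mul_distrib, Finset.prod_const, Finset.card_univ, Fintype.card_fin]

lemma smul_prod_smul {α β : Type*} [MeasurableSpace α] [MeasurableSpace β]
    (μ : Measure α) (ν : Measure β) [SigmaFinite μ] [SigmaFinite ν]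
    (c d : ℝ≥0∞) (hc : c ≠ ⊤) (hd : d ≠ ⊤) :
    (c • μ).prod (d • ν) = (c * d) • (μ.prod ν) := by
  haveI := sigmaFinite_smul μ c hc
  haveI := sigmaFinite_smul ν d hd
  refine Measure.prod_eq fun s t hs ht => ?_
  rw [Measure.smul_apply, Measure.prod_prod]
  simp only [Measure.smul_apply, smul_eq_mul]
  ring

/-- for T ≥ 1, n ≥ 1, r', s' not both zero and q' = r' + s' − 1,
the volume of {(x,y) ∈ (ℝ^n)^{r'} × (ℂ^n)^{s'} : ∏|x_i|_∞ ∏|y_j|_∞² ≤ T and all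
|x_i|_∞, |y_j|_∞ ≥ 1} equals
2^{r'n} π^{s'n} (−1)^{q'} (−1 + T^n Σ_{i=0}^{q'} (−log T^n)^i / i!).
Here |·|_∞ is the sup norm (the default norm on the pi types `Fin n → ℝ`
and `Fin n → ℂ`). -/
theorem statement6 (r' s' n : ℕ) (hrs : 0 < r' + s') (hn : 1 ≤ n)
    (T : ℝ) (hT : 1 ≤ T) :
    (volume {z : (Fin r' → (Fin n → ℝ)) × (Fin s' → (Fin n → ℂ)) |
        (∏ i, ‖z.1 i‖) * (∏ j, ‖z.2 j‖ ^ 2) ≤ T ∧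
        (∀ i, 1 ≤ ‖z.1 i‖) ∧ (∀ j, 1 ≤ ‖z.2 j‖)}).toReal =
      2 ^ (r' * n) * π ^ (s' * n) * (-1 : ℝ) ^ (r' + s' - 1) *
        (-1 + T ^ n * ∑ i ∈ Finset.range ((r' + s' - 1) + 1),
          (-Real.log (T ^ n)) ^ i / (Nat.factorial i)) := by
  have hn0 : n ≠ 0 := Nat.one_le_iff_ne_zero.1 hn
  have hT0 : (0:ℝ) < T := lt_of_lt_of_le one_pos hT
  have hTn : (1:ℝ) ≤ T ^ n := one_le_pow₀ hT
  set q := r' + s' - 1 with hq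
  have hq1 : q + 1 = r' + s' := Nat.succ_pred_eq_of_pos hrs
  set c₁ : ℝ≥0∞ := ENNReal.ofReal (2 ^ n) with hc₁
  set c₂ : ℝ≥0∞ := ENNReal.ofReal (Real.pi ^ n) with hc₂
  have hc₁fin : c₁ ≠ ⊤ := ENNReal.ofReal_ne_top
  have hc₂fin : c₂ ≠ ⊤ := ENNReal.ofReal_ne_top
  set S₁ : Set ((Fin r' → ℝ) × (Fin s' → ℝ)) :=
    {p | (∀ i, 1 ≤ p.1 i) ∧ (∀ j, 1 ≤ p.2 j) ∧ (∏ i, p.1 i) * (∏ j, p.2 j) ≤ T ^ n} with hS₁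
  have hS₁meas : MeasurableSet S₁ := by
    have h2 : S₁ = (⋂ i, {p : (Fin r' → ℝ) × (Fin s' → ℝ) | 1 ≤ p.1 i})
        ∩ ((⋂ j, {p : (Fin r' → ℝ) × (Fin s' → ℝ) | 1 ≤ p.2 j})
        ∩ {p : (Fin r' → ℝ) × (Fin s' → ℝ) | (∏ i, p.1 i) * (∏ j, p.2 j) ≤ T ^ n}) := by
      ext p; simp [hS₁, mem_iInter]
    rw [h2]
    have hfst : ∀ i : Fin r', Measurable fun p : (Fin r' → ℝ) × (Fin s' → ℝ) => p.1 i :=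
      fun i => (measurable_pi_apply i).comp measurable_fst
    have hsnd : ∀ j : Fin s', Measurable fun p : (Fin r' → ℝ) × (Fin s' → ℝ) => p.2 j :=
      fun j => (measurable_pi_apply j).comp measurable_snd
    refine MeasurableSet.inter (MeasurableSet.iInter fun i => ?_)
      (MeasurableSet.inter (MeasurableSet.iInter fun j => ?_) ?_)
    · exact measurableSet_le measurable_const (hfst i)
    · exact measurableSet_le measurable_const (hsnd j)
    · exact measurableSet_le ((Finset.measurable_prod _ fun i _ => hfst i).mul
        (Finset.measurable_prod _ fun j _ => hsnd j)) measurable_const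
  set Φ : (Fin r' → (Fin n → ℝ)) × (Fin s' → (Fin n → ℂ)) → (Fin r' → ℝ) × (Fin s' → ℝ) :=
    fun z => (fun i => ‖z.1 i‖ ^ n, fun j => ‖z.2 j‖ ^ (2 * n)) with hΦ
  have hΦmeas : Measurable Φ := by
    refine Measurable.prodMk ?_ ?_
    · exact measurable_pi_lambda _ fun i =>
        (((measurable_pi_apply i).comp measurable_fst).norm).pow_const n
    · exact measurable_pi_lambda _ fun j =>
        (((measurable_pi_apply j).comp measurable_snd).norm).pow_const (2*n)
  have hsetEq : {z : (Fin r' → (Fin n → ℝ)) × (Fin s' → (Fin n → ℂ)) |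
        (∏ i, ‖z.1 i‖) * (∏ j, ‖z.2 j‖ ^ 2) ≤ T ∧
        (∀ i, 1 ≤ ‖z.1 i‖) ∧ (∀ j, 1 ≤ ‖z.2 j‖)} = Φ ⁻¹' S₁ := by
    ext z
    simp only [mem_setOf_eq, mem_preimage, hS₁, hΦ]
    have hx : ∀ i, (1 ≤ ‖z.1 i‖ ^ n ↔ 1 ≤ ‖z.1 i‖) :=
      fun i => one_le_pow_iff_of_nonneg (norm_nonneg _) hn0
    have hy : ∀ j, (1 ≤ ‖z.2 j‖ ^ (2*n) ↔ 1 ≤ ‖z.2 j‖) :=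
      fun j => one_le_pow_iff_of_nonneg (norm_nonneg _) (by positivity)
    have hprod : ((∏ i, ‖z.1 i‖) * (∏ j, ‖z.2 j‖ ^ 2)) ^ n
        = (∏ i, ‖z.1 i‖ ^ n) * (∏ j, ‖z.2 j‖ ^ (2*n)) := by
      rw [mul_pow, ← Finset.prod_pow, ← Finset.prod_pow]
      congr 1
      refine Finset.prod_congr rfl fun j _ => ?_
      rw [← pow_mul]
    have hle : ((∏ i, ‖z.1 i‖) * (∏ j, ‖z.2 j‖ ^ 2) ≤ T
        ↔ (∏ i, ‖z.1 i‖ ^ n) * (∏ j, ‖z.2 j‖ ^ (2*n)) ≤ T ^ n) := by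
      rw [← hprod]
      exact (pow_le_pow_iff_left₀ (by positivity) (by positivity) hn0).symm
    constructor
    · rintro ⟨h1, h2, h3⟩
      exact ⟨fun i => (hx i).2 (h2 i), fun j => (hy j).2 (h3 j), hle.1 h1⟩
    · rintro ⟨h1, h2, h3⟩
      exact ⟨hle.2 h3, fun i => (hx i).1 (h1 i), fun j => (hy j).1 (h2 j)⟩
  -- compute the pushforward measure
  haveI hsf1 : SigmaFinite (c₁ • (volume.restrict (Ioi (0:ℝ)))) :=
    sigmaFinite_smul _ _ hc₁fin
  haveI hsf2 : SigmaFinite (c₂ • (volume.restrict (Ioi (0:ℝ)))) :=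
    sigmaFinite_smul _ _ hc₂fin
  have hmap1 : Measure.map (fun x : Fin r' → (Fin n → ℝ) => fun i => ‖x i‖ ^ n) volume
      = Measure.pi (fun _ : Fin r' => c₁ • (volume.restrict (Ioi (0:ℝ)))) := by
    rw [MeasureTheory.volume_pi]
    exact map_pi_norm volume (measurable_norm.pow_const n) (map_norm_real n hn) r'
  have hmap2 : Measure.map (fun y : Fin s' → (Fin n → ℂ) => fun j => ‖y j‖ ^ (2*n)) volume
      = Measure.pi (fun _ : Fin s' => c₂ • (volume.restrict (Ioi (0:ℝ)))) := by
    rw [MeasureTheory.volume_pi]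
    exact map_pi_norm volume (measurable_norm.pow_const (2*n)) (map_norm_complex n hn) s'
  have hmapΦ : Measure.map Φ volume
      = (c₁ ^ r' * c₂ ^ s') • (((Measure.pi fun _ : Fin r' => (volume : Measure ℝ)).restrict
          (univ.pi fun _ => Ioi 0)).prod
          ((Measure.pi fun _ : Fin s' => (volume : Measure ℝ)).restrict
          (univ.pi fun _ => Ioi 0))) := by
    have : (volume : Measure ((Fin r' → (Fin n → ℝ)) × (Fin s' → (Fin n → ℂ))))
        = (volume : Measure (Fin r' → (Fin n → ℝ))).prod volume := Measure.volume_eq_prod _ _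
    rw [this]
    have hΦ' : Φ = Prod.map (fun x : Fin r' → (Fin n → ℝ) => fun i => ‖x i‖ ^ n)
        (fun y : Fin s' → (Fin n → ℂ) => fun j => ‖y j‖ ^ (2*n)) := rfl
    rw [hΦ', ← Measure.map_prod_map _ _
      (measurable_pi_lambda _ fun i =>
        (((measurable_pi_apply i)).norm).pow_const n)
      (measurable_pi_lambda _ fun j =>
        (((measurable_pi_apply j)).norm).pow_const (2*n)),
      hmap1, hmap2, pi_smul_restrict r' c₁ hc₁fin, pi_smul_restrict s' c₂ hc₂fin,
      smul_prod_smul _ _ _ _ (ENNReal.pow_ne_top hc₁fin) (ENNReal.pow_ne_top hc₂fin)]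
  -- evaluate
  have hS₁sub : S₁ ⊆ (univ.pi fun _ : Fin r' => Ioi (0:ℝ)) ×ˢ (univ.pi fun _ : Fin s' => Ioi (0:ℝ)) := by
    rintro p ⟨h1, h2, _⟩
    constructor
    · intro i _; exact lt_of_lt_of_le one_pos (h1 i)
    · intro j _; exact lt_of_lt_of_le one_pos (h2 j)
  have hPQ : ((Measure.pi fun _ : Fin r' => (volume : Measure ℝ)).prod
      (Measure.pi fun _ : Fin s' => (volume : Measure ℝ))) S₁
      = ENNReal.ofReal (Ffun (q+1) (T^n)) := by
    have hmp := measurePreserving_sumPiEquivProdPi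
      (μ := fun _ : Fin r' ⊕ Fin s' => (volume : Measure ℝ))
    rw [← hmp.measure_preimage hS₁meas.nullMeasurableSet]
    have hpre : (MeasurableEquiv.sumPiEquivProdPi (fun _ : Fin r' ⊕ Fin s' => ℝ)) ⁻¹' S₁
        = {g : (Fin r' ⊕ Fin s') → ℝ | (∀ i, 1 ≤ g i) ∧ ∏ i, g i ≤ T^n} := by
      ext g
      simp only [mem_preimage, hS₁, mem_setOf_eq, MeasurableEquiv.sumPiEquivProdPi,
        MeasurableEquiv.coe_mk, Equiv.sumPiEquivProdPi]
      rw [Fintype.prod_sum_type]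
      constructor
      · rintro ⟨h1, h2, h3⟩
        exact ⟨fun i => Sum.rec (fun a => h1 a) (fun b => h2 b) i, h3⟩
      · rintro ⟨h1, h2⟩
        exact ⟨fun a => h1 (Sum.inl a), fun b => h1 (Sum.inr b), h2⟩
    rw [hpre]
    exact keyι _ q (by simp [hq1]) hTn
  have hvol : volume {z : (Fin r' → (Fin n → ℝ)) × (Fin s' → (Fin n → ℂ)) |
        (∏ i, ‖z.1 i‖) * (∏ j, ‖z.2 j‖ ^ 2) ≤ T ∧
        (∀ i, 1 ≤ ‖z.1 i‖) ∧ (∀ j, 1 ≤ ‖z.2 j‖)}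
      = (c₁ ^ r' * c₂ ^ s') * ENNReal.ofReal (Ffun (q+1) (T^n)) := by
    rw [hsetEq, ← Measure.map_apply hΦmeas hS₁meas, hmapΦ, Measure.smul_apply,
      Measure.prod_restrict, Measure.restrict_apply hS₁meas,
      inter_eq_self_of_subset_left hS₁sub, hPQ, smul_eq_mul]
  rw [hvol]
  have hFnn : 0 ≤ Ffun (q+1) (T^n) := (key q (T^n) hTn).2
  rw [ENNReal.toReal_mul, ENNReal.toReal_mul, hc₁, hc₂, ← ENNReal.ofReal_pow (by positivity),
    ← ENNReal.ofReal_pow (by positivity), ENNReal.toReal_ofReal (by positivity),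
    ENNReal.toReal_ofReal (by positivity), ENNReal.toReal_ofReal hFnn]
  have h2 : ((2:ℝ) ^ n) ^ r' = 2 ^ (r' * n) := by rw [← pow_mul, mul_comm]
  have h3 : (Real.pi ^ n) ^ s' = Real.pi ^ (s' * n) := by rw [← pow_mul, mul_comm]
  rw [h2, h3]
  unfold Ffun
  have hq2 : q + 1 - 1 = q := rfl
  rw [hq2]
  ring
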